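/- For a finite normal-form game G with mixed strategy space Σ, the family of graphs {Graph(BR_ε) : ε > 0} forms a basis of neighborhoods of Graph(BR) in Σ × Σ: every open set containing Graph(BR) contains Graph(BR_ε) for some ε > 0. -/

import Mathlib

open Finset

/-- The multilinear extension of player `n`'s payoff to mixed-strategy profiles. -/
noncomputable def mixedPay {N : ℕ} {S : Fin N → Type} [∀ i, Fintype (S i)]
    (U : Fin N → (∀ i, S i) → ℝ) (n : Fin N) (σ : ∀ i, S i → ℝ) : ℝ :=
  ∑ s : ∀ i, S i, (∏ i, σ i (s i)) * U n s

/-- The Dirac (pure) mixed strategy on `a`. -/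
def purePt {α : Type} [DecidableEq α] (a : α) : α → ℝ := fun b => if b = a then 1 else 0

/-- The mixed strategy profile space `Σ = ∏ₙ Δ(Sₙ)`, as a subset of the ambient space. -/
def mixedSet {N : ℕ} (S : Fin N → Type) [∀ i, Fintype (S i)] : Set (∀ i, S i → ℝ) :=
  {σ | ∀ i, σ i ∈ stdSimplex ℝ (S i)}

/-- Graph of the best-reply correspondence `BR` of the finite game with payoffs `U`. -/
def brGraph {N : ℕ} {S : Fin N → Type} [∀ i, Fintype (S i)]
    (U : Fin N → (∀ i, S i) → ℝ) : Set ((∀ i, S i → ℝ) × (∀ i, S i → ℝ)) :=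
  {p | p.1 ∈ mixedSet S ∧ p.2 ∈ mixedSet S ∧
    ∀ n, ∀ τ ∈ stdSimplex ℝ (S n),
      mixedPay U n (Function.update p.1 n τ) ≤ mixedPay U n (Function.update p.1 n (p.2 n))}

/-- Graph of the `ε`-best-reply correspondence `BR_ε`. -/
def brEpsGraph {N : ℕ} {S : Fin N → Type} [∀ i, Fintype (S i)] [∀ i, DecidableEq (S i)]
    (U : Fin N → (∀ i, S i) → ℝ) (ε : ℝ) : Set ((∀ i, S i → ℝ) × (∀ i, S i → ℝ)) :=
  {p | p.1 ∈ mixedSet S ∧ p.2 ∈ mixedSet S ∧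
    ∀ n, ∀ s : S n,
      mixedPay U n (Function.update p.1 n (purePt s)) - ε <
        mixedPay U n (Function.update p.1 n (p.2 n))}

lemma mixedPay_cont {N : ℕ} {S : Fin N → Type} [∀ i, Fintype (S i)]
    (U : Fin N → (∀ i, S i) → ℝ) (n : Fin N) : Continuous (mixedPay U n) := by
  unfold mixedPay
  exact continuous_finset_sum _ fun s _ =>
    (continuous_finset_prod _ fun i _ =>
      (continuous_apply (s i)).comp (continuous_apply i)).mul continuous_const

lemma mixedPay_update_eq {N : ℕ} {S : Fin N → Type} [∀ i, Fintype (S i)]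
    [∀ i, DecidableEq (S i)]
    (U : Fin N → (∀ i, S i) → ℝ) (n : Fin N) (σ : ∀ i, S i → ℝ) (τ : S n → ℝ) :
    mixedPay U n (Function.update σ n τ) =
      ∑ s : ∀ i, S i, τ (s n) * ((∏ i ∈ univ.erase n, σ i (s i)) * U n s) := by
  unfold mixedPay
  refine Finset.sum_congr rfl fun s _ => ?_
  rw [← Finset.mul_prod_erase univ _ (mem_univ n), Function.update_self]
  rw [Finset.prod_congr rfl fun i hi => by
    rw [Function.update_of_ne (Finset.ne_of_mem_erase hi)]]
  ring

lemma mixedPay_update_lin {N : ℕ} {S : Fin N → Type} [∀ i, Fintype (S i)]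
    [∀ i, DecidableEq (S i)]
    (U : Fin N → (∀ i, S i) → ℝ) (n : Fin N) (σ : ∀ i, S i → ℝ) (τ : S n → ℝ) :
    mixedPay U n (Function.update σ n τ) =
      ∑ t : S n, τ t * mixedPay U n (Function.update σ n (purePt t)) := by
  rw [mixedPay_update_eq]
  simp only [mixedPay_update_eq, Finset.mul_sum]
  rw [Finset.sum_comm]
  refine Finset.sum_congr rfl fun s _ => ?_
  simp [purePt, mul_ite, ite_mul, mul_zero, zero_mul, mul_one, Finset.sum_ite_eq]

/-- The graphs `{Graph(BR_ε) : ε > 0}` form a basis of neighborhoods of `Graph(BR)`: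
every open set containing `Graph(BR)` contains `Graph(BR_ε)` for some `ε > 0`. -/
theorem stmt_4 {N : ℕ} {S : Fin N → Type} [∀ i, Fintype (S i)] [∀ i, DecidableEq (S i)]
    (U : Fin N → (∀ i, S i) → ℝ) :
    ∀ O : Set ((∀ i, S i → ℝ) × (∀ i, S i → ℝ)), IsOpen O → brGraph U ⊆ O →
      ∃ ε : ℝ, 0 < ε ∧ brEpsGraph U ε ⊆ O := by
  intro O hO hsub
  by_contra hcon
  push_neg at hcon
  have hex : ∀ k : ℕ, ∃ p, p ∈ brEpsGraph U (1/(k+1)) ∧ p ∉ O := by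
    intro k
    obtain ⟨p, hp, hpo⟩ := Set.not_subset.mp (hcon (1/(k+1)) (by positivity))
    exact ⟨p, hp, hpo⟩
  choose f hf hfO using hex
  have hK : IsCompact (mixedSet S) := by
    have hKeq : mixedSet S = Set.pi Set.univ fun i => stdSimplex ℝ (S i) := by
      ext σ; simp [mixedSet, Set.mem_pi]
    rw [hKeq]; exact isCompact_univ_pi fun i => isCompact_stdSimplex _ _
  have hfm : ∀ k, f k ∈ mixedSet S ×ˢ mixedSet S := fun k => ⟨(hf k).1, (hf k).2.1⟩
  obtain ⟨q, hqK, φ, hφ, hlim⟩ := (hK.prod hK).tendsto_subseq hfm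
  have hqO : q ∉ O :=
    hO.isClosed_compl.mem_of_tendsto hlim
      (Filter.Eventually.of_forall fun k => hfO (φ k))
  refine hqO (hsub ⟨hqK.1, hqK.2, fun n τ hτ => ?_⟩)
  have hpure : ∀ t : S n,
      mixedPay U n (Function.update q.1 n (purePt t)) ≤
        mixedPay U n (Function.update q.1 n (q.2 n)) := by
    intro t
    have hg : Continuous fun p : (∀ i, S i → ℝ) × (∀ i, S i → ℝ) =>
        mixedPay U n (Function.update p.1 n (purePt t)) :=
      (mixedPay_cont U n).comp (continuous_fst.update n continuous_const)
    have hh : Continuous fun p : (∀ i, S i → ℝ) × (∀ i, S i → ℝ) =>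
        mixedPay U n (Function.update p.1 n (p.2 n)) :=
      (mixedPay_cont U n).comp
        (continuous_fst.update n ((continuous_apply n).comp continuous_snd))
    have h1 : Filter.Tendsto
        (fun k => mixedPay U n (Function.update (f (φ k)).1 n (purePt t)) - 1/(φ k + 1))
        Filter.atTop (nhds (mixedPay U n (Function.update q.1 n (purePt t)) - 0)) :=
      ((hg.tendsto q).comp hlim).sub
        (tendsto_one_div_add_atTop_nhds_zero_nat.comp hφ.tendsto_atTop)
    rw [sub_zero] at h1
    have h2 := (hh.tendsto q).comp hlim
    exact le_of_tendsto_of_tendsto h1 h2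
      (Filter.Eventually.of_forall fun k => le_of_lt ((hf (φ k)).2.2 n t))
  rw [mixedPay_update_lin]
  calc ∑ t, τ t * mixedPay U n (Function.update q.1 n (purePt t))
      ≤ ∑ t, τ t * mixedPay U n (Function.update q.1 n (q.2 n)) :=
        Finset.sum_le_sum fun t _ => mul_le_mul_of_nonneg_left (hpure t) (hτ.1 t)
    _ = mixedPay U n (Function.update q.1 n (q.2 n)) := by
        rw [← Finset.sum_mul, hτ.2, one_mul]
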